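/- arXiv:2006.14298 — 2 statements merged into one kernel-verified Lean document; each statement's English description precedes it below -/
import Mathlib

section
/- If a point on the offset circle of a weighted site lies strictly inside the offset circle of a higher-weighted site at time t, then it lies strictly inside that offset circle at every later time t' ≥ t. Formally: let s_i, s_j ∈ ℝ² with weights 0 < w_i ≤ w_j, let p(t) := s_i + t·w_i·u for a fixed unit vector u. If dist(p(t), s_j) < t·w_j for some t ≥ 0, then dist(p(t'), s_j) < t'·w_j for all t' ≥ t. -/
/-- An inactive point stays inactive: if the point of fixed polar angle on the
offset circle of `s_i` lies strictly inside the offset circle of a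
higher-weighted site `s_j` at time `t`, then it does so for all `t' ≥ t`. -/
theorem inactive_stays_inactive
    (s_i s_j : EuclideanSpace ℝ (Fin 2)) (w_i w_j : ℝ)
    (hwi : 0 < w_i) (hij : w_i ≤ w_j)
    (u : EuclideanSpace ℝ (Fin 2)) (hu : ‖u‖ = 1)
    (t : ℝ) (ht : 0 ≤ t)
    (h : dist (s_i + (t * w_i) • u) s_j < t * w_j) :
    ∀ t' ≥ t, dist (s_i + (t' * w_i) • u) s_j < t' * w_j := by
  intro t' ht'
  have hstep : dist (s_i + (t' * w_i) • u) (s_i + (t * w_i) • u) = (t' - t) * w_i := by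
    rw [dist_eq_norm]
    have : s_i + (t' * w_i) • u - (s_i + (t * w_i) • u) = ((t' - t) * w_i) • u := by
      module
    rw [this, norm_smul, hu, mul_one, Real.norm_eq_abs,
      abs_of_nonneg (mul_nonneg (by linarith) hwi.le)]
  calc dist (s_i + (t' * w_i) • u) s_j
      ≤ dist (s_i + (t' * w_i) • u) (s_i + (t * w_i) • u) + dist (s_i + (t * w_i) • u) s_j :=
        dist_triangle _ _ _
    _ < (t' - t) * w_i + t * w_j := by rw [hstep]; linarith
    _ ≤ t' * w_j := by nlinarith
end

section
/- Let s_i, s_j ∈ ℝ² be distinct with weights 0 < w_i < w_j, and let t range over the open interval (t_min, t_max) = (d/(w_i+w_j), d/(w_j−w_i)) with d = dist(s_i,s_j). Then the two intersection points of the offset circles at time t both converge, as t → t_min⁺, to the point on segment [s_i,s_j] dividing it in ratio w_i : w_j from s_i, and as t → t_max⁻, to the point on the line through s_i and s_j outside the segment dividing it externally in ratio w_i : w_j. These two limit points are exactly the intersections of the Apollonius bisector circle with the line through s_i and s_j. -/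
lemma aux_norm (a b : EuclideanSpace ℝ (Fin 2)) (l : ℝ) :
    ‖a - l • b‖ ^ 2 = (1 - l) * ‖a‖ ^ 2 + l * ‖a - b‖ ^ 2 - l * (1 - l) * ‖b‖ ^ 2 := by
  have h1 := norm_sub_sq_real a (l • b)
  have h2 := norm_sub_sq_real a b
  rw [real_inner_smul_right, norm_smul, Real.norm_eq_abs, mul_pow, sq_abs] at h1
  linear_combination h1 - l * h2

lemma aux_dist (q x y : EuclideanSpace ℝ (Fin 2)) (l : ℝ) :
    dist q ((1 - l) • x + l • y) ^ 2
      = (1 - l) * dist q x ^ 2 + l * dist q y ^ 2 - l * (1 - l) * dist x y ^ 2 := by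
  have h : q - ((1 - l) • x + l • y) = (q - x) - l • (y - x) := by module
  have h2 : (q - x) - (y - x) = q - y := by module
  rw [dist_eq_norm, dist_eq_norm, dist_eq_norm, dist_eq_norm, h, aux_norm, h2,
    norm_sub_rev x y]

/-- Any selection of intersection points of the two growing offset circles
converges to the internal division point as `t` tends to the collision time
and to the external division point as `t` tends to the domination time; these
two points are exactly the intersections of the Apollonius bisector circle
with the line through the two sites. -/
theorem offset_intersections_limits
    (s_i s_j : EuclideanSpace ℝ (Fin 2)) (w_i w_j : ℝ)
    (hwi : 0 < w_i) (hij : w_i < w_j) (hs : s_i ≠ s_j)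
    (p : ℝ → EuclideanSpace ℝ (Fin 2))
    (hp : ∀ t ∈ Set.Ioo (dist s_i s_j / (w_i + w_j)) (dist s_i s_j / (w_j - w_i)),
      p t ∈ Metric.sphere s_i (t * w_i) ∩ Metric.sphere s_j (t * w_j)) :
    Filter.Tendsto p
      (nhdsWithin (dist s_i s_j / (w_i + w_j))
        (Set.Ioo (dist s_i s_j / (w_i + w_j)) (dist s_i s_j / (w_j - w_i))))
      (nhds ((w_i + w_j)⁻¹ • (w_j • s_i + w_i • s_j))) ∧
    Filter.Tendsto p
      (nhdsWithin (dist s_i s_j / (w_j - w_i))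
        (Set.Ioo (dist s_i s_j / (w_i + w_j)) (dist s_i s_j / (w_j - w_i))))
      (nhds ((w_j - w_i)⁻¹ • (w_j • s_i - w_i • s_j))) ∧
    {q : EuclideanSpace ℝ (Fin 2) | dist q s_i / w_i = dist q s_j / w_j} ∩
        {q | ∃ r : ℝ, q = AffineMap.lineMap s_i s_j r} =
      {(w_i + w_j)⁻¹ • (w_j • s_i + w_i • s_j),
       (w_j - w_i)⁻¹ • (w_j • s_i - w_i • s_j)} := by
  have hd : 0 < dist s_i s_j := dist_pos.mpr hs
  have hwj : 0 < w_j := lt_trans hwi hij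
  have hsum : 0 < w_i + w_j := by linarith
  have hdiff : 0 < w_j - w_i := by linarith
  set d := dist s_i s_j with hd_def
  set S := Set.Ioo (d / (w_i + w_j)) (d / (w_j - w_i)) with hS_def
  -- the two division points as lineMap values
  have hL1 : AffineMap.lineMap s_i s_j (w_i / (w_i + w_j))
      = (w_i + w_j)⁻¹ • (w_j • s_i + w_i • s_j) := by
    rw [AffineMap.lineMap_apply_module]
    match_scalars <;> field_simp <;> ring
  have hL2 : AffineMap.lineMap s_i s_j (-(w_i / (w_j - w_i)))
      = (w_j - w_i)⁻¹ • (w_j • s_i - w_i • s_j) := by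
    rw [AffineMap.lineMap_apply_module]
    match_scalars <;> field_simp <;> ring
  -- distance-square formula for points on both spheres
  have key : ∀ l : ℝ, ∀ t ∈ S, dist (p t) ((1 - l) • s_i + l • s_j) ^ 2
      = (1 - l) * (t * w_i) ^ 2 + l * (t * w_j) ^ 2 - l * (1 - l) * d ^ 2 := by
    intro l t ht
    obtain ⟨h1, h2⟩ := hp t ht
    rw [Metric.mem_sphere] at h1 h2
    rw [aux_dist, h1, h2]
  have key1 : ∀ t ∈ S, dist (p t) ((w_i + w_j)⁻¹ • (w_j • s_i + w_i • s_j))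
      = Real.sqrt (w_i * w_j * (t ^ 2 - (d / (w_i + w_j)) ^ 2)) := by
    intro t ht
    have h := key (w_i / (w_i + w_j)) t ht
    rw [AffineMap.lineMap_apply_module] at hL1
    rw [← hL1] at *
    rw [← Real.sqrt_sq dist_nonneg, h]
    congr 1
    field_simp
    ring
  have key2 : ∀ t ∈ S, dist (p t) ((w_j - w_i)⁻¹ • (w_j • s_i - w_i • s_j))
      = Real.sqrt (w_i * w_j * ((d / (w_j - w_i)) ^ 2 - t ^ 2)) := by
    intro t ht
    have h := key (-(w_i / (w_j - w_i))) t ht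
    rw [AffineMap.lineMap_apply_module] at hL2
    rw [← hL2] at *
    rw [← Real.sqrt_sq dist_nonneg, h]
    congr 1
    field_simp
    ring
  refine ⟨?_, ?_, ?_⟩
  · -- limit at collision time
    rw [tendsto_iff_dist_tendsto_zero]
    have cont : Filter.Tendsto
        (fun t : ℝ => Real.sqrt (w_i * w_j * (t ^ 2 - (d / (w_i + w_j)) ^ 2)))
        (nhdsWithin (d / (w_i + w_j)) S) (nhds 0) := by
      have hc : Continuous fun t : ℝ =>
          Real.sqrt (w_i * w_j * (t ^ 2 - (d / (w_i + w_j)) ^ 2)) := by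
        fun_prop
      have := (hc.tendsto (d / (w_i + w_j))).mono_left
        (nhdsWithin_le_nhds (s := S))
      simpa using this
    refine Filter.Tendsto.congr' ?_ cont
    filter_upwards [self_mem_nhdsWithin] with t ht
    exact (key1 t ht).symm
  · -- limit at domination time
    rw [tendsto_iff_dist_tendsto_zero]
    have cont : Filter.Tendsto
        (fun t : ℝ => Real.sqrt (w_i * w_j * ((d / (w_j - w_i)) ^ 2 - t ^ 2)))
        (nhdsWithin (d / (w_j - w_i)) S) (nhds 0) := by
      have hc : Continuous fun t : ℝ =>
          Real.sqrt (w_i * w_j * ((d / (w_j - w_i)) ^ 2 - t ^ 2)) := by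
        fun_prop
      have := (hc.tendsto (d / (w_j - w_i))).mono_left
        (nhdsWithin_le_nhds (s := S))
      simpa using this
    refine Filter.Tendsto.congr' ?_ cont
    filter_upwards [self_mem_nhdsWithin] with t ht
    exact (key2 t ht).symm
  · -- set equality
    ext q
    simp only [Set.mem_inter_iff, Set.mem_setOf_eq, Set.mem_insert_iff,
      Set.mem_singleton_iff]
    constructor
    · rintro ⟨hb, r, rfl⟩
      rw [dist_lineMap_left, dist_lineMap_right,
        div_eq_div_iff hwi.ne' hwj.ne'] at hb
      simp only [Real.norm_eq_abs] at hb
      have h' : |w_j * r| = |w_i * (1 - r)| := by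
        rw [abs_mul, abs_mul, abs_of_pos hwj, abs_of_pos hwi]
        apply mul_right_cancel₀ hd.ne'
        linear_combination hb
      rcases abs_eq_abs.mp h' with h | h
      · left
        have hr : r = w_i / (w_i + w_j) := by
          field_simp
          linarith
        rw [hr, hL1]
      · right
        have hr : r = -(w_i / (w_j - w_i)) := by
          field_simp
          linarith
        rw [hr, hL2]
    · rintro (rfl | rfl)
      · refine ⟨?_, w_i / (w_i + w_j), hL1.symm⟩
        rw [← hL1, dist_lineMap_left, dist_lineMap_right,
          Real.norm_eq_abs, Real.norm_eq_abs,
          abs_of_pos (by positivity),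
          abs_of_pos (by rw [sub_pos, div_lt_one hsum]; linarith)]
        field_simp
        ring
      · refine ⟨?_, -(w_i / (w_j - w_i)), hL2.symm⟩
        rw [← hL2, dist_lineMap_left, dist_lineMap_right,
          Real.norm_eq_abs, Real.norm_eq_abs, abs_neg,
          abs_of_pos (by positivity),
          abs_of_pos (by rw [sub_neg_eq_add]; positivity)]
        field_simp
        ring
end
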